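/- (Envy-freeness implies strong swap-stability) Every envy-free feasible allocation is strongly swap-stable, and every strongly swap-stable allocation is weakly swap-stable. Moreover, both inclusions are strict: there exist instances with feasible allocations that are strongly swap-stable but not envy-free, and weakly swap-stable but not strongly swap-stable. -/

import Mathlib

open Finset MeasureTheory ENNReal

/-- Number of agents in coalition `T` whose destination is at least `r`. -/
noncomputable def nT (xd : ℕ → ℝ) (T : Finset ℕ) (r : ℝ) : ℕ := (T.filter fun a => r ≤ xd a).card

/-- Shapley cost share of a passenger dropping at `y` in coalition `T`
(`∞` when `n_T` vanishes on part of `(0,y]`). -/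
noncomputable def phi (xd : ℕ → ℝ) (T : Finset ℕ) (y : ℝ) : ℝ≥0∞ :=
  ∫⁻ r in Set.Ioc (0:ℝ) y, (nT xd T r : ℝ≥0∞)⁻¹

/-- Cost share including the capacity constraint of the taxi. -/
noncomputable def taxiCost (xd : ℕ → ℝ) (q : ℕ) (T : Finset ℕ) (y : ℝ) : ℝ≥0∞ :=
  if T.card ≤ q then phi xd T y else ⊤

/-- `Tl` is a partition of the agent set `A`. -/
def IsPartition (A : Finset ℕ) {k : ℕ} (Tl : Fin k → Finset ℕ) : Prop :=
  (∀ i j, i ≠ j → Disjoint (Tl i) (Tl j)) ∧ Finset.univ.biUnion Tl = A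

/-- Feasibility: each coalition respects the capacity of its taxi. -/
def Feasible {k : ℕ} (q : Fin k → ℕ) (Tl : Fin k → Finset ℕ) : Prop :=
  ∀ i, (Tl i).card ≤ q i

/-- Agent `a` of taxi `i` envies agent `b` of taxi `j`. -/
noncomputable def Envies (xd : ℕ → ℝ) {k : ℕ} (q : Fin k → ℕ)
    (Tl : Fin k → Finset ℕ) (i j : Fin k) (a b : ℕ) : Prop :=
  i ≠ j ∧ a ∈ Tl i ∧ b ∈ Tl j ∧
    taxiCost xd (q j) ((Tl j).erase b ∪ {a}) (xd a) < taxiCost xd (q i) (Tl i) (xd a)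

/-- Agent `a` of taxi `i` can replace agent `b` of taxi `j`. -/
noncomputable def CanReplace (xd : ℕ → ℝ) {k : ℕ} (q : Fin k → ℕ)
    (Tl : Fin k → Finset ℕ) (i j : Fin k) (a b : ℕ) : Prop :=
  a ∈ Tl i ∧ b ∈ Tl j ∧ (i = j ∨
    taxiCost xd (q j) ((Tl j).erase b ∪ {a}) (xd a) ≤ taxiCost xd (q i) (Tl i) (xd a))

/-- Envy-freeness: no agent envies another. -/
noncomputable def EF (xd : ℕ → ℝ) {k : ℕ} (q : Fin k → ℕ)
    (Tl : Fin k → Finset ℕ) : Prop :=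
  ∀ i j a b, ¬ Envies xd q Tl i j a b

/-- Weak swap-stability: no two agents envy each other. -/
noncomputable def WSS (xd : ℕ → ℝ) {k : ℕ} (q : Fin k → ℕ)
    (Tl : Fin k → Finset ℕ) : Prop :=
  ∀ i j a b, ¬ (Envies xd q Tl i j a b ∧ Envies xd q Tl j i b a)

/-- Strong swap-stability: no pair `(a,b)` where `a` envies `b` and `b` can replace
`a`. -/
noncomputable def SSS (xd : ℕ → ℝ) {k : ℕ} (q : Fin k → ℕ)
    (Tl : Fin k → Finset ℕ) : Prop :=
  ∀ i j a b, ¬ (Envies xd q Tl i j a b ∧ CanReplace xd q Tl j i b a)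

/-! ### Auxiliary lemmas -/

lemma lint_nT_const (xd : ℕ → ℝ) (T : Finset ℕ) {a b : ℝ} (m : ℕ)
    (h : ∀ r ∈ Set.Ioc a b, nT xd T r = m) :
    ∫⁻ r in Set.Ioc a b, (nT xd T r : ℝ≥0∞)⁻¹ = (m : ℝ≥0∞)⁻¹ * ENNReal.ofReal (b - a) := by
  rw [setLIntegral_congr_fun measurableSet_Ioc
      (fun r hr => by rw [h r hr]),
    setLIntegral_const, Real.volume_Ioc]

lemma nT_all (xd : ℕ → ℝ) (T : Finset ℕ) (r : ℝ) (h : ∀ a ∈ T, r ≤ xd a) :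
    nT xd T r = T.card := by rw [nT, Finset.filter_true_of_mem h]

lemma nT_pair_snd (xd : ℕ → ℝ) (u v : ℕ) (r : ℝ) (hu : ¬ r ≤ xd u) (hv : r ≤ xd v) :
    nT xd {u, v} r = 1 := by
  rw [nT, show ({u,v}:Finset ℕ) = insert u {v} from rfl, Finset.filter_insert, if_neg hu,
    Finset.filter_singleton, if_pos hv, Finset.card_singleton]

lemma phi_split (xd : ℕ → ℝ) (T : Finset ℕ) :
    phi xd T 2 = (∫⁻ r in Set.Ioc (0:ℝ) 1, (nT xd T r : ℝ≥0∞)⁻¹)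
      + ∫⁻ r in Set.Ioc (1:ℝ) 2, (nT xd T r : ℝ≥0∞)⁻¹ := by
  rw [phi, ← Set.Ioc_union_Ioc_eq_Ioc (by norm_num : (0:ℝ) ≤ 1) (by norm_num : (1:ℝ) ≤ 2),
    lintegral_union measurableSet_Ioc (Set.Ioc_disjoint_Ioc_of_le le_rfl)]

lemma phi_one_pair (xd : ℕ → ℝ) (u v : ℕ) (huv : u ≠ v) (hu : 1 ≤ xd u) (hv : 1 ≤ xd v) :
    phi xd {u,v} 1 = 2⁻¹ := by
  rw [phi, lint_nT_const xd _ 2 (fun r hr => by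
    rw [nT_all xd _ r (by
      intro a ha
      rcases Finset.mem_insert.mp ha with rfl | ha
      · exact le_trans hr.2 hu
      · rw [Finset.mem_singleton] at ha; subst ha; exact le_trans hr.2 hv),
      Finset.card_pair huv])]
  norm_num

lemma phi_pair_12 (xd : ℕ → ℝ) (u v : ℕ) (huv : u ≠ v) (hu : xd u = 1) (hv : xd v = 2) :
    phi xd {u,v} 2 = 2⁻¹ + 1 := by
  rw [phi_split, lint_nT_const xd _ 2 (fun r hr => by
      rw [nT_all xd _ r (by
        intro a ha
        rcases Finset.mem_insert.mp ha with rfl | ha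
        · rw [hu]; exact hr.2
        · rw [Finset.mem_singleton] at ha; subst ha; rw [hv]; linarith [hr.2]),
        Finset.card_pair huv]),
    lint_nT_const xd _ 1 (fun r hr => nT_pair_snd xd u v r
      (by rw [hu]; linarith [hr.1]) (by rw [hv]; exact hr.2))]
  norm_num

lemma phi_pair_22 (xd : ℕ → ℝ) (u v : ℕ) (huv : u ≠ v) (hu : xd u = 2) (hv : xd v = 2) :
    phi xd {u,v} 2 = 1 := by
  rw [phi, lint_nT_const xd _ 2 (fun r hr => by
    rw [nT_all xd _ r (by
      intro a ha
      rcases Finset.mem_insert.mp ha with rfl | ha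
      · rw [hu]; exact hr.2
      · rw [Finset.mem_singleton] at ha; subst ha; rw [hv]; exact hr.2),
      Finset.card_pair huv])]
  rw [show ENNReal.ofReal (2 - 0 : ℝ) = (2:ℝ≥0∞) by norm_num]
  exact ENNReal.inv_mul_cancel (by norm_num) (by norm_num)

lemma phi_single1 (xd : ℕ → ℝ) (u : ℕ) (hu : 1 ≤ xd u) :
    phi xd {u} 1 = 1 := by
  rw [phi, lint_nT_const xd _ 1 (fun r hr => by
    rw [nT_all xd _ r (by
      intro a ha; rw [Finset.mem_singleton] at ha; subst ha; exact le_trans hr.2 hu),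
      Finset.card_singleton])]
  norm_num

lemma phi_single2 (xd : ℕ → ℝ) (u : ℕ) (hu : 2 ≤ xd u) :
    phi xd {u} 2 = 2 := by
  rw [phi, lint_nT_const xd _ 1 (fun r hr => by
    rw [nT_all xd _ r (by
      intro a ha; rw [Finset.mem_singleton] at ha; subst ha; exact le_trans hr.2 hu),
      Finset.card_singleton])]
  rw [show ENNReal.ofReal (2 - 0 : ℝ) = (2:ℝ≥0∞) by norm_num]
  norm_num

lemma taxiCost_eq (xd : ℕ → ℝ) (q : ℕ) (T : Finset ℕ) (y : ℝ) (h : T.card ≤ q) :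
    taxiCost xd q T y = phi xd T y := if_pos h

lemma half_add_one_lt_two : (2⁻¹ + 1 : ℝ≥0∞) < 2 := by
  rw [show (2:ℝ≥0∞) = 1 + 1 by norm_num]
  exact ENNReal.add_lt_add_right one_ne_top (by rw [ENNReal.inv_lt_one]; norm_num)

lemma one_lt_half_add_one : (1 : ℝ≥0∞) < 2⁻¹ + 1 := by
  nth_rewrite 1 [show (1:ℝ≥0∞) = 0 + 1 by norm_num]
  exact ENNReal.add_lt_add_right one_ne_top (by norm_num)

lemma not_one_lt_half : ¬ ((1:ℝ≥0∞) < 2⁻¹) := by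
  intro h
  exact absurd (le_of_lt h) (by norm_num)

lemma not_two_lt_half_add_one : ¬ ((2:ℝ≥0∞) < 2⁻¹ + 1) :=
  fun h => lt_irrefl _ (lt_trans h half_add_one_lt_two)

lemma not_two_le_half_add_one : ¬ ((2:ℝ≥0∞) ≤ 2⁻¹ + 1) :=
  not_le.mpr half_add_one_lt_two

/-- destinations for the first witness: `x = (1, 2, 2)`. -/
noncomputable def xA : ℕ → ℝ := fun n => if n ≤ 1 then 1 else 2
/-- destinations for the second witness: `x = (1, 1, 2, 2)`. -/
noncomputable def xB : ℕ → ℝ := fun n => if n ≤ 2 then 1 else 2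

lemma xA1 : xA 1 = 1 := by norm_num [xA]
lemma xA2 : xA 2 = 2 := by norm_num [xA]
lemma xA3 : xA 3 = 2 := by norm_num [xA]
lemma xB1 : xB 1 = 1 := by norm_num [xB]
lemma xB2 : xB 2 = 1 := by norm_num [xB]
lemma xB3 : xB 3 = 2 := by norm_num [xB]
lemma xB4 : xB 4 = 2 := by norm_num [xB]

/-- EF ⊆ SSS ⊆ WSS, and both inclusions are strict: there are instances
with feasible allocations that are strongly swap-stable but not envy-free, and weakly
swap-stable but not strongly swap-stable. -/
theorem stmt19 :
    (∀ (xd : ℕ → ℝ) (k : ℕ) (q : Fin k → ℕ) (Tl : Fin k → Finset ℕ),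
      EF xd q Tl → SSS xd q Tl) ∧
    (∀ (xd : ℕ → ℝ) (k : ℕ) (q : Fin k → ℕ) (Tl : Fin k → Finset ℕ),
      SSS xd q Tl → WSS xd q Tl) ∧
    (∃ (A : Finset ℕ) (xd : ℕ → ℝ) (k : ℕ) (q : Fin k → ℕ)
        (Tl : Fin k → Finset ℕ),
      (∀ a ∈ A, 0 < xd a) ∧ IsPartition A Tl ∧ Feasible q Tl ∧
        SSS xd q Tl ∧ ¬ EF xd q Tl) ∧
    (∃ (A : Finset ℕ) (xd : ℕ → ℝ) (k : ℕ) (q : Fin k → ℕ)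
        (Tl : Fin k → Finset ℕ),
      (∀ a ∈ A, 0 < xd a) ∧ IsPartition A Tl ∧ Feasible q Tl ∧
        WSS xd q Tl ∧ ¬ SSS xd q Tl) := by
  refine ⟨?_, ?_, ?_, ?_⟩
  · -- EF → SSS
    rintro xd k q Tl h i j a b ⟨hE, _⟩
    exact h i j a b hE
  · -- SSS → WSS
    rintro xd k q Tl h i j a b ⟨h1, h2⟩
    exact h i j a b ⟨h1, h2.2.1, h2.2.2.1, Or.inr h2.2.2.2.le⟩
  · -- SSS but not EF
    refine ⟨{1,2,3}, xA, 2, ![2,1], ![{1,2},{3}], ?_, ⟨by decide, by decide⟩, by intro i; fin_cases i <;> decide, ?_, ?_⟩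
    · intro a ha
      fin_cases ha <;> norm_num [xA]
    · -- SSS
      rintro i j a b ⟨hE, hR⟩
      obtain ⟨hne, ha, hb, hlt⟩ := hE
      fin_cases i <;> fin_cases j
      · exact hne rfl
      · -- i = 0, j = 1 : a ∈ {1,2}, b = 3
        simp only [Fin.mk_zero, Fin.mk_one, Fin.isValue, Matrix.cons_val_zero, Matrix.cons_val_one, Matrix.head_cons] at ha hb hlt
        rw [Finset.mem_singleton] at hb; subst hb
        rcases Finset.mem_insert.mp ha with rfl | ha
        · rw [show ({3}:Finset ℕ).erase 3 ∪ {1} = {1} by decide,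
            taxiCost_eq _ _ _ _ (by norm_num), taxiCost_eq _ _ _ _ (by norm_num), xA1,
            phi_single1 xA 1 xA1.ge,
            phi_one_pair xA 1 2 (by norm_num) xA1.ge (by rw [xA2]; norm_num)] at hlt
          exact not_one_lt_half hlt
        · rw [Finset.mem_singleton] at ha; subst ha
          rw [show ({3}:Finset ℕ).erase 3 ∪ {2} = {2} by decide,
            taxiCost_eq _ _ _ _ (by norm_num), taxiCost_eq _ _ _ _ (by norm_num), xA2,
            phi_single2 xA 2 xA2.ge,
            phi_pair_12 xA 1 2 (by norm_num) xA1 xA2] at hlt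
          exact not_two_lt_half_add_one hlt
      · -- i = 1, j = 0 : a = 3, b ∈ {1,2}; use hR
        obtain ⟨hb', ha', hor⟩ := hR
        simp only [Fin.mk_zero, Fin.mk_one, Fin.isValue, Matrix.cons_val_zero, Matrix.cons_val_one, Matrix.head_cons] at ha hb hb' ha' hor
        rw [Finset.mem_singleton] at ha; subst ha
        rcases hor with h0 | hle
        · exact absurd h0 (by decide)
        · rcases Finset.mem_insert.mp hb with rfl | hb
          · rw [show ({3}:Finset ℕ).erase 3 ∪ {1} = {1} by decide,
              taxiCost_eq _ _ _ _ (by norm_num), taxiCost_eq _ _ _ _ (by norm_num), xA1,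
              phi_single1 xA 1 xA1.ge,
              phi_one_pair xA 1 2 (by norm_num) xA1.ge (by rw [xA2]; norm_num)] at hle
            exact absurd hle (by norm_num)
          · rw [Finset.mem_singleton] at hb; subst hb
            rw [show ({3}:Finset ℕ).erase 3 ∪ {2} = {2} by decide,
              taxiCost_eq _ _ _ _ (by norm_num), taxiCost_eq _ _ _ _ (by norm_num), xA2,
              phi_single2 xA 2 xA2.ge,
              phi_pair_12 xA 1 2 (by norm_num) xA1 xA2] at hle
            exact not_two_le_half_add_one hle
      · exact hne rfl
    · -- ¬ EF : agent 3 envies agent 2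
      intro h
      refine h 1 0 3 2 ⟨by decide, by decide, by decide, ?_⟩
      show taxiCost xA 2 (({1,2}:Finset ℕ).erase 2 ∪ {3}) (xA 3) < taxiCost xA 1 {3} (xA 3)
      rw [show ({1,2}:Finset ℕ).erase 2 ∪ {3} = {1,3} by decide,
        taxiCost_eq _ _ _ _ (by norm_num), taxiCost_eq _ _ _ _ (by norm_num), xA3,
        phi_single2 xA 3 xA3.ge, phi_pair_12 xA 1 3 (by norm_num) xA1 xA3]
      exact half_add_one_lt_two
  · -- WSS but not SSS
    refine ⟨{1,2,3,4}, xB, 2, ![2,2], ![{1,3},{2,4}], ?_, ⟨by decide, by decide⟩, by intro i; fin_cases i <;> decide, ?_, ?_⟩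
    · intro a ha
      fin_cases ha <;> norm_num [xB]
    · -- WSS
      rintro i j a b ⟨hE1, hE2⟩
      obtain ⟨hne, ha, hb, hlt⟩ := hE1
      obtain ⟨_, _, _, hlt'⟩ := hE2
      fin_cases i <;> fin_cases j
      · exact hne rfl
      · -- i = 0, j = 1 : a ∈ {1,3}, b ∈ {2,4}
        simp only [Fin.mk_zero, Fin.mk_one, Fin.isValue, Matrix.cons_val_zero, Matrix.cons_val_one, Matrix.head_cons] at ha hb hlt hlt'
        rcases Finset.mem_insert.mp ha with rfl | ha
        · -- a = 1
          rcases Finset.mem_insert.mp hb with rfl | hb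
          · -- b = 2 : agent 1 does not envy 2
            rw [show ({2,4}:Finset ℕ).erase 2 ∪ {1} = {1,4} by decide,
              taxiCost_eq _ _ _ _ (by norm_num), taxiCost_eq _ _ _ _ (by norm_num), xB1,
              phi_one_pair xB 1 4 (by norm_num) xB1.ge (by rw [xB4]; norm_num),
              phi_one_pair xB 1 3 (by norm_num) xB1.ge (by rw [xB3]; norm_num)] at hlt
            exact lt_irrefl _ hlt
          · rw [Finset.mem_singleton] at hb; subst hb
            -- b = 4
            rw [show ({2,4}:Finset ℕ).erase 4 ∪ {1} = {1,2} by decide,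
              taxiCost_eq _ _ _ _ (by norm_num), taxiCost_eq _ _ _ _ (by norm_num), xB1,
              phi_one_pair xB 1 2 (by norm_num) xB1.ge xB2.ge,
              phi_one_pair xB 1 3 (by norm_num) xB1.ge (by rw [xB3]; norm_num)] at hlt
            exact lt_irrefl _ hlt
        · rw [Finset.mem_singleton] at ha; subst ha
          -- a = 3
          rcases Finset.mem_insert.mp hb with rfl | hb
          · -- b = 2 : but 2 does not envy 3
            rw [show ({1,3}:Finset ℕ).erase 3 ∪ {2} = {1,2} by decide,
              taxiCost_eq _ _ _ _ (by norm_num), taxiCost_eq _ _ _ _ (by norm_num), xB2,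
              phi_one_pair xB 1 2 (by norm_num) xB1.ge xB2.ge,
              phi_one_pair xB 2 4 (by norm_num) xB2.ge (by rw [xB4]; norm_num)] at hlt'
            exact lt_irrefl _ hlt'
          · rw [Finset.mem_singleton] at hb; subst hb
            -- b = 4 : 3 does not envy 4
            rw [show ({2,4}:Finset ℕ).erase 4 ∪ {3} = {2,3} by decide,
              taxiCost_eq _ _ _ _ (by norm_num), taxiCost_eq _ _ _ _ (by norm_num), xB3,
              phi_pair_12 xB 2 3 (by norm_num) xB2 xB3,
              phi_pair_12 xB 1 3 (by norm_num) xB1 xB3] at hlt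
            exact lt_irrefl _ hlt
      · -- i = 1, j = 0 : a ∈ {2,4}, b ∈ {1,3}
        simp only [Fin.mk_zero, Fin.mk_one, Fin.isValue, Matrix.cons_val_zero, Matrix.cons_val_one, Matrix.head_cons] at ha hb hlt hlt'
        rcases Finset.mem_insert.mp ha with rfl | ha
        · -- a = 2
          rcases Finset.mem_insert.mp hb with rfl | hb
          · -- b = 1
            rw [show ({1,3}:Finset ℕ).erase 1 ∪ {2} = {2,3} by decide,
              taxiCost_eq _ _ _ _ (by norm_num), taxiCost_eq _ _ _ _ (by norm_num), xB2,
              phi_one_pair xB 2 3 (by norm_num) xB2.ge (by rw [xB3]; norm_num),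
              phi_one_pair xB 2 4 (by norm_num) xB2.ge (by rw [xB4]; norm_num)] at hlt
            exact lt_irrefl _ hlt
          · rw [Finset.mem_singleton] at hb; subst hb
            -- b = 3
            rw [show ({1,3}:Finset ℕ).erase 3 ∪ {2} = {1,2} by decide,
              taxiCost_eq _ _ _ _ (by norm_num), taxiCost_eq _ _ _ _ (by norm_num), xB2,
              phi_one_pair xB 1 2 (by norm_num) xB1.ge xB2.ge,
              phi_one_pair xB 2 4 (by norm_num) xB2.ge (by rw [xB4]; norm_num)] at hlt
            exact lt_irrefl _ hlt
        · rw [Finset.mem_singleton] at ha; subst ha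
          -- a = 4
          rcases Finset.mem_insert.mp hb with rfl | hb
          · -- b = 1 : but 1 does not envy 4
            rw [show ({2,4}:Finset ℕ).erase 4 ∪ {1} = {1,2} by decide,
              taxiCost_eq _ _ _ _ (by norm_num), taxiCost_eq _ _ _ _ (by norm_num), xB1,
              phi_one_pair xB 1 2 (by norm_num) xB1.ge xB2.ge,
              phi_one_pair xB 1 3 (by norm_num) xB1.ge (by rw [xB3]; norm_num)] at hlt'
            exact lt_irrefl _ hlt'
          · rw [Finset.mem_singleton] at hb; subst hb
            -- b = 3 : 4 does not envy 3
            rw [show ({1,3}:Finset ℕ).erase 3 ∪ {4} = {1,4} by decide,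
              taxiCost_eq _ _ _ _ (by norm_num), taxiCost_eq _ _ _ _ (by norm_num), xB4,
              phi_pair_12 xB 1 4 (by norm_num) xB1 xB4,
              phi_pair_12 xB 2 4 (by norm_num) xB2 xB4] at hlt
            exact lt_irrefl _ hlt
      · exact hne rfl
    · -- ¬ SSS : 3 envies 2 and 2 can replace 3
      intro h
      refine h 0 1 3 2 ⟨⟨by decide, by decide, by decide, ?_⟩, by decide, by decide, Or.inr ?_⟩
      · show taxiCost xB 2 (({2,4}:Finset ℕ).erase 2 ∪ {3}) (xB 3)
          < taxiCost xB 2 {1,3} (xB 3)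
        rw [show ({2,4}:Finset ℕ).erase 2 ∪ {3} = {3,4} by decide,
          taxiCost_eq _ _ _ _ (by norm_num), taxiCost_eq _ _ _ _ (by norm_num), xB3,
          phi_pair_22 xB 3 4 (by norm_num) xB3 xB4,
          phi_pair_12 xB 1 3 (by norm_num) xB1 xB3]
        exact one_lt_half_add_one
      · show taxiCost xB 2 (({1,3}:Finset ℕ).erase 3 ∪ {2}) (xB 2)
          ≤ taxiCost xB 2 {2,4} (xB 2)
        rw [show ({1,3}:Finset ℕ).erase 3 ∪ {2} = {1,2} by decide,
          taxiCost_eq _ _ _ _ (by norm_num), taxiCost_eq _ _ _ _ (by norm_num), xB2,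
          phi_one_pair xB 1 2 (by norm_num) xB1.ge xB2.ge,
          phi_one_pair xB 2 4 (by norm_num) xB2.ge (by rw [xB4]; norm_num)]
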